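/- Let L be a code loop of rank n with basis B = {a₁, …, aₙ}, and for σ ⊆ {1,…,n} let a_σ be the left-normed product of the aᵢ with i ∈ σ taken in increasing order (a_∅ = 1), so that L = {a_σ, −a_σ : σ ⊆ {1,…,n}}. Let φ be a half-automorphism of L fixing every element of B. Then for every σ one has φ(a_σ) ∈ {a_σ, −a_σ} and φ(−a_σ) = −φ(a_σ), and the sign function Ψ defined by φ(a_σ) = Ψ(σ)·a_σ satisfies Ψ(∅) = 1, Ψ({j}) = 1 for every j, and Ψ(σ△μ) = Ψ(σ)·Ψ(μ) whenever a_σ·a_μ = a_μ·a_σ, where △ denotes symmetric difference. -/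

import Mathlib

/-- A loop: a binary operation with two-sided identity in which left and right
translations are bijections (equivalently, equations `a·x = b` and `y·a = b`
have unique solutions). -/
structure LoopStr (α : Type*) where
  mul : α → α → α
  one : α
  one_mul : ∀ x, mul one x = x
  mul_one : ∀ x, mul x one = x
  mulLeft_bij : ∀ a, Function.Bijective (fun x => mul a x)
  mulRight_bij : ∀ a, Function.Bijective (fun x => mul x a)

namespace LoopStr

variable {α : Type*} (S : LoopStr α)

/-- A subset containing `1` and closed under multiplication and (left and right) inverses. -/
def IsClosed (T : Set α) : Prop :=
  S.one ∈ T ∧ (∀ x ∈ T, ∀ y ∈ T, S.mul x y ∈ T) ∧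
    (∀ x ∈ T, ∀ y, S.mul x y = S.one → y ∈ T) ∧
    (∀ x ∈ T, ∀ y, S.mul y x = S.one → y ∈ T)

/-- The subloop generated by a set: the smallest closed subset containing it. -/
def gen (X : Set α) : Set α := ⋂₀ {T | X ⊆ T ∧ S.IsClosed T}

def Generates (X : Set α) : Prop := S.gen X = Set.univ

/-- A basis: a minimal generating set. -/
def IsBasis (X : Set α) : Prop := S.Generates X ∧ ∀ Y ⊂ X, ¬ S.Generates Y

def IsHalfAut (f : α → α) : Prop :=
  Function.Bijective f ∧
    ∀ x y, f (S.mul x y) = S.mul (f x) (f y) ∨ f (S.mul x y) = S.mul (f y) (f x)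

def IsAut (f : α → α) : Prop :=
  Function.Bijective f ∧ ∀ x y, f (S.mul x y) = S.mul (f x) (f y)

def IsAntiAut (f : α → α) : Prop :=
  Function.Bijective f ∧ ∀ x y, f (S.mul x y) = S.mul (f y) (f x)

/-- The commutant of a loop. -/
def commutant : Set α := {c | ∀ x, S.mul c x = S.mul x c}

/-- The nucleus of a loop. -/
def nucleus : Set α :=
  {a | ∀ u v, S.mul (S.mul a u) v = S.mul a (S.mul u v) ∧
        S.mul (S.mul u a) v = S.mul u (S.mul a v) ∧
        S.mul (S.mul u v) a = S.mul u (S.mul v a)}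

end LoopStr

/-- A code loop: a finite Moufang loop with a unique nontrivial square `neg` (written `-1`),
which (by Chein–Goodaire) is central of order 2, and all squares, commutators and
associators lie in `{1, neg}`. -/
structure CodeLoop (α : Type*) extends LoopStr α where
  finite : Finite α
  moufang : ∀ x y z, mul (mul x (mul z x)) y = mul x (mul z (mul x y))
  neg : α
  neg_ne_one : neg ≠ one
  neg_is_square : ∃ x, mul x x = neg
  square_unique : ∀ m, m ≠ one → (∃ x, mul x x = m) → m = neg
  neg_mul_comm : ∀ x, mul neg x = mul x neg
  neg_mul_assoc₁ : ∀ x y, mul (mul neg x) y = mul neg (mul x y)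
  neg_mul_assoc₂ : ∀ x y, mul (mul x neg) y = mul x (mul neg y)
  neg_mul_assoc₃ : ∀ x y, mul (mul x y) neg = mul x (mul y neg)
  neg_neg : mul neg neg = one
  square_mem : ∀ x, mul x x = one ∨ mul x x = neg
  comm_mem : ∀ x y, mul x y = mul y x ∨ mul x y = mul (mul y x) neg
  assoc_mem : ∀ x y z, mul (mul x y) z = mul x (mul y z) ∨
      mul (mul x y) z = mul (mul x (mul y z)) neg

/-- The left-normed product `a_σ` of the basis elements indexed by `σ`, in increasing order. -/
def aSig {α : Type*} (S : LoopStr α) {n : ℕ} (a : Fin n → α) (σ : Finset (Fin n)) : α :=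
  ((σ.sort (· ≤ ·)).map a).foldl S.mul S.one



namespace CL5

variable {α : Type*} (C : CodeLoop α)

lemma nn (y : α) : C.mul C.neg (C.mul C.neg y) = y := by
  rw [← C.neg_mul_assoc₁, C.neg_neg, C.one_mul]

lemma mnl (x y : α) : C.mul (C.mul C.neg x) y = C.mul C.neg (C.mul x y) :=
  C.neg_mul_assoc₁ x y

lemma mnr (x y : α) : C.mul x (C.mul C.neg y) = C.mul C.neg (C.mul x y) := by
  rw [← C.neg_mul_assoc₂, ← C.neg_mul_comm, C.neg_mul_assoc₁]

lemma cancel_left {a x y : α} (h : C.mul a x = C.mul a y) : x = y :=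
  (C.mulLeft_bij a).1 h

lemma cancel_right {a x y : α} (h : C.mul x a = C.mul y a) : x = y :=
  (C.mulRight_bij a).1 h

def st : Setoid α where
  r x y := x = y ∨ x = C.mul C.neg y
  iseqv := by
    constructor
    · exact fun x => Or.inl rfl
    · rintro x y (rfl | rfl)
      · exact Or.inl rfl
      · exact Or.inr (nn C y).symm
    · rintro x y z (rfl | rfl) (h | h)
      · exact Or.inl h
      · exact Or.inr h
      · exact Or.inr (by rw [h])
      · exact Or.inl (by rw [h, nn])

abbrev Q := Quotient (st C)

def qk : α → Q C := Quotient.mk (st C)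

lemma st_mul {x x' y y' : α} (hx : (st C).r x x') (hy : (st C).r y y') :
    (st C).r (C.mul x y) (C.mul x' y') := by
  rcases hx with rfl | rfl <;> rcases hy with rfl | rfl
  · exact Or.inl rfl
  · exact Or.inr (mnr C _ _)
  · exact Or.inr (mnl C _ _)
  · exact Or.inl (by rw [mnl, mnr, nn])

instance : CommGroup (Q C) where
  mul := Quotient.map₂ C.mul (fun _ _ hx _ _ hy => st_mul C hx hy)
  one := qk C C.one
  inv := id
  mul_assoc := by
    rintro ⟨x⟩ ⟨y⟩ ⟨z⟩
    rcases C.assoc_mem x y z with h | h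
    · exact Quotient.sound (Or.inl h)
    · exact Quotient.sound (Or.inr (by rw [h, ← C.neg_mul_comm]))
  one_mul := by rintro ⟨x⟩; exact Quotient.sound (Or.inl (C.one_mul x))
  mul_one := by rintro ⟨x⟩; exact Quotient.sound (Or.inl (C.mul_one x))
  inv_mul_cancel := by
    rintro ⟨x⟩
    rcases C.square_mem x with h | h
    · exact Quotient.sound (Or.inl h)
    · exact Quotient.sound (Or.inr (by rw [h, C.mul_one]))
  mul_comm := by
    rintro ⟨x⟩ ⟨y⟩
    rcases C.comm_mem x y with h | h
    · exact Quotient.sound (Or.inl h)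
    · exact Quotient.sound (Or.inr (by rw [h, ← C.neg_mul_comm]))

lemma qk_mul (x y : α) : qk C (C.mul x y) = qk C x * qk C y := rfl

lemma qk_one : qk C C.one = 1 := rfl

lemma qk_neg : qk C C.neg = 1 := Quotient.sound (Or.inr (C.mul_one C.neg).symm)

lemma qk_exact {x y : α} (h : qk C x = qk C y) : x = y ∨ x = C.mul C.neg y :=
  Quotient.exact h

lemma qk_foldl (l : List α) (x : α) :
    qk C (l.foldl C.mul x) = (l.map (qk C)).foldl (· * ·) (qk C x) := by
  induction l generalizing x with
  | nil => rfl
  | cons h t ih =>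
      rw [List.foldl_cons, List.map_cons, List.foldl_cons, ← qk_mul]
      exact ih (C.mul x h)

lemma qk_aSig {n : ℕ} (a : Fin n → α) (σ : Finset (Fin n)) :
    qk C (aSig C.toLoopStr a σ) = ∏ i ∈ σ, qk C (a i) := by
  have h1 : qk C (aSig C.toLoopStr a σ)
      = ((σ.sort (· ≤ ·)).map (fun i => qk C (a i))).foldl (· * ·) 1 := by
    show qk C (((σ.sort (· ≤ ·)).map a).foldl C.mul C.one) = _
    rw [qk_foldl, List.map_map, qk_one]
    rfl
  have h2 : (∏ i ∈ σ, qk C (a i))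
      = ((σ.sort (· ≤ ·)).map (fun i => qk C (a i))).prod := by
    rw [Finset.prod, ← Finset.sort_eq σ (· ≤ ·), Multiset.map_coe, Multiset.prod_coe]
  rw [h1, h2, List.prod_eq_foldl]

lemma prod_sd {ι M : Type*} [CommMonoid M] [DecidableEq ι] (g : ι → M)
    (hg : ∀ i, g i * g i = 1) (s t : Finset ι) :
    ∏ i ∈ symmDiff s t, g i = (∏ i ∈ s, g i) * ∏ i ∈ t, g i := by
  rw [← Finset.prod_union_inter]
  have hu : symmDiff s t ∪ (s ∩ t) = s ∪ t := by
    have := symmDiff_sup_inf s t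
    simpa [Finset.sup_eq_union, Finset.inf_eq_inter] using this
  have hd : Disjoint (symmDiff s t) (s ∩ t) := by
    have := disjoint_symmDiff_inf s t
    simpa [Finset.inf_eq_inter] using this
  rw [← hu, Finset.prod_union hd, mul_assoc, ← Finset.prod_mul_distrib]
  simp [hg]

lemma aSig_mul {n : ℕ} (a : Fin n → α) (σ μ : Finset (Fin n)) :
    C.mul (aSig C.toLoopStr a σ) (aSig C.toLoopStr a μ)
        = aSig C.toLoopStr a (symmDiff σ μ) ∨
    C.mul (aSig C.toLoopStr a σ) (aSig C.toLoopStr a μ)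
        = C.mul C.neg (aSig C.toLoopStr a (symmDiff σ μ)) := by
  apply qk_exact
  have hg : ∀ i : Fin n, qk C (a i) * qk C (a i) = 1 := by
    intro i
    rw [← qk_mul]
    rcases C.square_mem (a i) with h | h
    · rw [h, qk_one]
    · rw [h, qk_neg]
  rw [qk_mul, qk_aSig, qk_aSig, qk_aSig, prod_sd _ hg]

variable {φ : α → α}

lemma phi_one (hφ : C.toLoopStr.IsHalfAut φ) : φ C.one = C.one := by
  have h := hφ.2 C.one C.one
  rw [C.one_mul] at h
  have h2 : C.mul (φ C.one) (φ C.one) = φ C.one := by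
    rcases h with h | h <;> exact h.symm
  refine cancel_left C (a := φ C.one) (x := φ C.one) (y := C.one) ?_
  rw [h2, C.mul_one]

lemma phi_neg (hφ : C.toLoopStr.IsHalfAut φ) : φ C.neg = C.neg := by
  obtain ⟨x, hx⟩ := C.neg_is_square
  have h := hφ.2 x x
  have h2 : φ C.neg = C.mul (φ x) (φ x) := by
    rw [← hx]; rcases h with h | h <;> exact h
  rcases C.square_mem (φ x) with h3 | h3
  · exfalso
    have he : φ C.neg = φ C.one := by rw [h2, h3, phi_one C hφ]
    exact C.neg_ne_one (hφ.1.1 he)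
  · rw [h2, h3]

lemma phi_negmul (hφ : C.toLoopStr.IsHalfAut φ) (y : α) :
    φ (C.mul C.neg y) = C.mul C.neg (φ y) := by
  rcases hφ.2 C.neg y with h | h
  · rw [h, phi_neg C hφ]
  · rw [h, phi_neg C hφ, ← C.neg_mul_comm]

lemma phi_foldl (hφ : C.toLoopStr.IsHalfAut φ) (l : List α) :
    (∀ x ∈ l, φ x = x) →
    φ (l.foldl C.mul C.one) = l.foldl C.mul C.one ∨
    φ (l.foldl C.mul C.one) = C.mul C.neg (l.foldl C.mul C.one) := by
  induction l using List.reverseRecOn with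
  | nil => exact fun _ => Or.inl (phi_one C hφ)
  | append_singleton t x ih =>
    intro hl
    have hx : φ x = x := hl x (by simp)
    have hP := ih (fun y hy => hl y (by simp [hy]))
    set P := t.foldl C.mul C.one with hPdef
    have hfold : (t ++ [x]).foldl C.mul C.one = C.mul P x := by
      rw [List.foldl_append]
      rfl
    rw [hfold]
    have hcomm : C.mul x (φ P) = C.mul (φ P) x ∨
        C.mul x (φ P) = C.mul C.neg (C.mul (φ P) x) := by
      rcases C.comm_mem x (φ P) with h | h
      · exact Or.inl h
      · exact Or.inr (by rw [h, ← C.neg_mul_comm])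
    have hmain : φ (C.mul P x) = C.mul (φ P) x ∨
        φ (C.mul P x) = C.mul C.neg (C.mul (φ P) x) := by
      rcases hφ.2 P x with h | h
      · exact Or.inl (by rw [h, hx])
      · rw [h, hx]; exact hcomm
    rcases hmain with h | h <;> rcases hP with h2 | h2
    · exact Or.inl (by rw [h, h2])
    · exact Or.inr (by rw [h, h2, mnl])
    · exact Or.inr (by rw [h, h2])
    · exact Or.inl (by rw [h, h2, mnl, nn])

lemma sign_mul {ε δ : α} (hε : ε = C.one ∨ ε = C.neg) (hδ : δ = C.one ∨ δ = C.neg)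
    (x y : α) : C.mul (C.mul ε x) (C.mul δ y) = C.mul (C.mul ε δ) (C.mul x y) := by
  rcases hε with rfl | rfl <;> rcases hδ with rfl | rfl <;>
    simp only [C.one_mul, C.mul_one, mnl, mnr, nn, C.neg_neg]

lemma sign_comm {ε δ : α} (hε : ε = C.one ∨ ε = C.neg) (hδ : δ = C.one ∨ δ = C.neg) :
    C.mul ε δ = C.mul δ ε := by
  rcases hε with rfl | rfl <;> rcases hδ with rfl | rfl <;>
    simp only [C.one_mul, C.mul_one]

end CL5

open CL5 in

/-- A half-automorphism fixing every element of a basis acts on each `a_σ` by a sign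
`Ψ(σ) ∈ {1, -1}` with `Ψ(∅) = Ψ({j}) = 1`, and `Ψ(σ Δ μ) = Ψ(σ)·Ψ(μ)` whenever
`a_σ` and `a_μ` commute; moreover `φ(-a_σ) = -φ(a_σ)`. -/
theorem stmt5 {α : Type*} (C : CodeLoop α) {n : ℕ} (a : Fin n → α)
    (hinj : Function.Injective a) (hbasis : C.toLoopStr.IsBasis (Set.range a))
    (hcover : ∀ x : α, ∃ σ : Finset (Fin n),
        x = aSig C.toLoopStr a σ ∨ x = C.mul C.neg (aSig C.toLoopStr a σ))
    (φ : α → α) (hφ : C.toLoopStr.IsHalfAut φ) (hφB : ∀ i, φ (a i) = a i) :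
    (∀ σ : Finset (Fin n), φ (aSig C.toLoopStr a σ) = aSig C.toLoopStr a σ ∨
        φ (aSig C.toLoopStr a σ) = C.mul C.neg (aSig C.toLoopStr a σ)) ∧
    (∀ σ : Finset (Fin n), φ (C.mul C.neg (aSig C.toLoopStr a σ)) =
        C.mul C.neg (φ (aSig C.toLoopStr a σ))) ∧
    ∃ Ψ : Finset (Fin n) → α,
      (∀ σ, Ψ σ = C.one ∨ Ψ σ = C.neg) ∧
      (∀ σ, φ (aSig C.toLoopStr a σ) = C.mul (Ψ σ) (aSig C.toLoopStr a σ)) ∧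
      Ψ ∅ = C.one ∧ (∀ j, Ψ {j} = C.one) ∧
      (∀ σ μ : Finset (Fin n),
        C.mul (aSig C.toLoopStr a σ) (aSig C.toLoopStr a μ) =
          C.mul (aSig C.toLoopStr a μ) (aSig C.toLoopStr a σ) →
        Ψ (symmDiff σ μ) = C.mul (Ψ σ) (Ψ μ)) := by
  classical
  have part1 : ∀ σ : Finset (Fin n),
      φ (aSig C.toLoopStr a σ) = aSig C.toLoopStr a σ ∨
      φ (aSig C.toLoopStr a σ) = C.mul C.neg (aSig C.toLoopStr a σ) := by
    intro σ
    show φ (((σ.sort (· ≤ ·)).map a).foldl C.mul C.one) = _ ∨ _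
    refine phi_foldl C hφ _ ?_
    intro x hx
    simp only [List.mem_map] at hx
    obtain ⟨i, _, rfl⟩ := hx
    exact hφB i
  refine ⟨part1, fun σ => phi_negmul C hφ _, ?_⟩
  set Ψ : Finset (Fin n) → α := fun σ =>
    if φ (aSig C.toLoopStr a σ) = aSig C.toLoopStr a σ then C.one else C.neg with hΨ
  have hsign : ∀ σ, Ψ σ = C.one ∨ Ψ σ = C.neg := by
    intro σ
    by_cases h : φ (aSig C.toLoopStr a σ) = aSig C.toLoopStr a σ
    · exact Or.inl (by simp only [hΨ, if_pos h])
    · exact Or.inr (by simp only [hΨ, if_neg h])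
  have hval : ∀ σ, φ (aSig C.toLoopStr a σ) = C.mul (Ψ σ) (aSig C.toLoopStr a σ) := by
    intro σ
    by_cases h : φ (aSig C.toLoopStr a σ) = aSig C.toLoopStr a σ
    · simp only [hΨ, if_pos h, C.one_mul]
      exact h
    · simp only [hΨ, if_neg h]
      rcases part1 σ with h1 | h1
      · exact absurd h1 h
      · exact h1
  refine ⟨Ψ, hsign, hval, ?_, ?_, ?_⟩
  · have hA0 : aSig C.toLoopStr a ∅ = C.one := by
      show ((Finset.sort (∅ : Finset (Fin n)) (· ≤ ·)).map a).foldl C.mul C.one = C.one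
      rw [Finset.sort_empty]
      rfl
    simp only [hΨ, hA0, if_pos (phi_one C hφ)]
  · intro j
    have hA1 : aSig C.toLoopStr a {j} = a j := by
      show ((Finset.sort ({j} : Finset (Fin n)) (· ≤ ·)).map a).foldl C.mul C.one = a j
      rw [Finset.sort_singleton]
      exact C.one_mul _
    simp only [hΨ, hA1, if_pos (hφB j)]
  · intro σ μ hc
    have hx : φ (aSig C.toLoopStr a σ) = C.mul (Ψ σ) (aSig C.toLoopStr a σ) := hval σ
    have hy : φ (aSig C.toLoopStr a μ) = C.mul (Ψ μ) (aSig C.toLoopStr a μ) := hval μ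
    have hz : φ (aSig C.toLoopStr a (symmDiff σ μ))
        = C.mul (Ψ (symmDiff σ μ)) (aSig C.toLoopStr a (symmDiff σ μ)) := hval _
    have hst : φ (C.mul (aSig C.toLoopStr a σ) (aSig C.toLoopStr a μ))
        = C.mul (C.mul (Ψ σ) (Ψ μ))
            (C.mul (aSig C.toLoopStr a σ) (aSig C.toLoopStr a μ)) := by
      rcases hφ.2 (aSig C.toLoopStr a σ) (aSig C.toLoopStr a μ) with h | h
      · rw [h, hx, hy, sign_mul C (hsign σ) (hsign μ)]
      · rw [h, hx, hy, sign_mul C (hsign μ) (hsign σ), ← hc,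
          sign_comm C (hsign μ) (hsign σ)]
    rcases aSig_mul C a σ μ with he | he
    · have e1 : φ (C.mul (aSig C.toLoopStr a σ) (aSig C.toLoopStr a μ))
          = C.mul (Ψ (symmDiff σ μ)) (aSig C.toLoopStr a (symmDiff σ μ)) := by
        rw [he, hz]
      exact cancel_right C (e1.symm.trans (by rw [hst, he]))
    · have e1 : φ (C.mul (aSig C.toLoopStr a σ) (aSig C.toLoopStr a μ))
          = C.mul C.neg (C.mul (Ψ (symmDiff σ μ)) (aSig C.toLoopStr a (symmDiff σ μ))) := by
        rw [he, phi_negmul C hφ, hz]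
      have e2 : φ (C.mul (aSig C.toLoopStr a σ) (aSig C.toLoopStr a μ))
          = C.mul C.neg (C.mul (C.mul (Ψ σ) (Ψ μ)) (aSig C.toLoopStr a (symmDiff σ μ))) := by
        rw [hst, he, mnr]
      exact cancel_right C (cancel_left C (e1.symm.trans e2))
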